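/- Suppose messages x ∈ {0,1}^n are encoded as follows: for each x there is an orthonormal family {|φ_{x,l}⟩}_{l ∈ {0,1}^{E-m}} of vectors in a Hilbert space of dimension 2^{E+m}, and Bob decodes by measuring with orthogonal projections {P_y}_{y ∈ {0,1}^n} with mutually orthogonal ranges summing to at most the identity. If x is uniform on {0,1}^n and l is uniform on {0,1}^{E-m}, then the probability of correct decoding, Pr[C] = 2^{-n} 2^{-(E-m)} Σ_{x,l} ‖P_x |φ_{x,l}⟩‖², satisfies Pr[C] ≤ 2^{2m}/2^n. -/

import Mathlib

theorem stmt_4 (n E m : ℕ) (hm : m ≤ E)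
    (φ : (Fin n → Bool) → (Fin (E - m) → Bool) → EuclideanSpace ℂ (Fin (E + m) → Bool))
    (hφ : ∀ x, Orthonormal ℂ (φ x))
    (P : (Fin n → Bool) →
      EuclideanSpace ℂ (Fin (E + m) → Bool) →ₗ[ℂ] EuclideanSpace ℂ (Fin (E + m) → Bool))
    (hidem : ∀ x, P x ∘ₗ P x = P x)
    (hsa : ∀ x, LinearMap.adjoint (P x) = P x)
    (horth : ∀ x y, x ≠ y → P x ∘ₗ P y = 0)
    (hle : ∀ v, ∑ x, ‖P x v‖ ^ 2 ≤ ‖v‖ ^ 2)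
    (PrC : ℝ)
    (hPrC : PrC = ((2 : ℝ) ^ n)⁻¹ * ((2 : ℝ) ^ (E - m))⁻¹ *
      ∑ x, ∑ l, ‖P x (φ x l)‖ ^ 2) :
    PrC ≤ (2 : ℝ) ^ (2 * m) / (2 : ℝ) ^ n := by
  classical
  let b : OrthonormalBasis (Fin (E + m) → Bool) ℂ (EuclideanSpace ℂ (Fin (E + m) → Bool)) :=
    EuclideanSpace.basisFun (Fin (E + m) → Bool) ℂ
  -- Parseval for any vector
  have parseval : ∀ w : EuclideanSpace ℂ (Fin (E + m) → Bool), ‖w‖ ^ 2 = ∑ j : (Fin (E + m) → Bool), ‖(inner ℂ (b j) w : ℂ)‖ ^ 2 := by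
    intro w
    have h1 : ‖w‖ = ‖b.repr w‖ := (b.repr.norm_map w).symm
    rw [h1, EuclideanSpace.norm_eq]
    rw [Real.sq_sqrt (by positivity)]
    congr 1
    ext j
    rw [b.repr_apply_apply]
  -- key: for each x, ∑_l ‖P x (φ x l)‖² ≤ ∑_j ‖P x (b j)‖²
  have key : ∀ x, ∑ l, ‖P x (φ x l)‖ ^ 2 ≤ ∑ j : (Fin (E + m) → Bool), ‖P x (b j)‖ ^ 2 := by
    intro x
    have step : ∑ l, ‖P x (φ x l)‖ ^ 2
        = ∑ j : (Fin (E + m) → Bool), ∑ l, ‖(inner ℂ (φ x l) (P x (b j)) : ℂ)‖ ^ 2 := by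
      rw [Finset.sum_comm]
      refine Finset.sum_congr rfl fun l _ => ?_
      rw [parseval (P x (φ x l))]
      refine Finset.sum_congr rfl fun j _ => ?_
      have h : (inner ℂ (b j) (P x (φ x l)) : ℂ) = inner ℂ (P x (b j)) (φ x l) := by
        conv_lhs => rw [← hsa x]
        rw [LinearMap.adjoint_inner_right]
      rw [h, norm_inner_symm]
    rw [step]
    refine Finset.sum_le_sum fun j _ => ?_
    exact (hφ x).sum_inner_products_le (P x (b j))
  have total : ∑ x, ∑ l, ‖P x (φ x l)‖ ^ 2 ≤ (2 : ℝ) ^ (E + m) := by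
    calc ∑ x, ∑ l, ‖P x (φ x l)‖ ^ 2 ≤ ∑ x, ∑ j : (Fin (E + m) → Bool), ‖P x (b j)‖ ^ 2 :=
          Finset.sum_le_sum fun x _ => key x
      _ = ∑ j : (Fin (E + m) → Bool), ∑ x, ‖P x (b j)‖ ^ 2 := Finset.sum_comm
      _ ≤ ∑ j : (Fin (E + m) → Bool), ‖(b j : EuclideanSpace ℂ (Fin (E + m) → Bool))‖ ^ 2 :=
          Finset.sum_le_sum fun j _ => hle (b j)
      _ = ∑ j : (Fin (E + m) → Bool), (1 : ℝ) := by
          refine Finset.sum_congr rfl fun j _ => ?_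
          rw [b.orthonormal.1 j]; norm_num
      _ = (2 : ℝ) ^ (E + m) := by
          rw [Finset.sum_const, Finset.card_univ]
          simp
  rw [hPrC]
  have h2n : (0:ℝ) < (2:ℝ) ^ n := by positivity
  have h2e : (0:ℝ) < (2:ℝ) ^ (E - m) := by positivity
  have hmul : ((2 : ℝ) ^ n)⁻¹ * ((2 : ℝ) ^ (E - m))⁻¹ * (2:ℝ) ^ (E + m)
      = (2 : ℝ) ^ (2 * m) / (2 : ℝ) ^ n := by
    have hE : E + m = (E - m) + 2 * m := by omega
    rw [hE, pow_add]
    field_simp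
  calc ((2 : ℝ) ^ n)⁻¹ * ((2 : ℝ) ^ (E - m))⁻¹ * ∑ x, ∑ l, ‖P x (φ x l)‖ ^ 2
      ≤ ((2 : ℝ) ^ n)⁻¹ * ((2 : ℝ) ^ (E - m))⁻¹ * (2:ℝ) ^ (E + m) := by
        apply mul_le_mul_of_nonneg_left total (by positivity)
    _ = (2 : ℝ) ^ (2 * m) / (2 : ℝ) ^ n := hmul
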